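/- Linear access, centralized optimum: for n ≥ 2 and λ > 1, the welfare function W(c) = 1 − (1 − λc)ⁿ − nc on c ∈ [0, 1/λ] is maximized at c_opt = λ^{−1} − λ^{−n/(n−1)}, with optimal value W(c_opt) = 1 − λ^{−n/(n−1)} − n(λ^{−1} − λ^{−n/(n−1)}), and this optimal value is strictly positive. -/

import Mathlib

open Real

/-- Tangent-line (Bernoulli) inequality: for `r > 0`, `t ≥ 0`,
`r^n + n r^(n-1) (t - r) ≤ t^n`. -/
lemma tangent_le (n : ℕ) (hn : 1 ≤ n) {r t : ℝ} (hr : 0 < r) (ht : 0 ≤ t) :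
    r ^ n + n * r ^ (n - 1) * (t - r) ≤ t ^ n := by
  have ha : (-1 : ℝ) ≤ t / r - 1 := by
    have : 0 ≤ t / r := div_nonneg ht hr.le
    linarith
  have h := one_add_mul_le_pow (by linarith : (-2:ℝ) ≤ t / r - 1) n
  have h2 : (1 + (t / r - 1)) = t / r := by ring
  rw [h2] at h
  have hrpow : (0:ℝ) < r ^ n := pow_pos hr n
  have h3 : (r ^ n) * (1 + n * (t / r - 1)) ≤ (r ^ n) * (t / r) ^ n :=
    mul_le_mul_of_nonneg_left h hrpow.le
  have h4 : (r ^ n) * (t / r) ^ n = t ^ n := by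
    rw [div_pow, mul_div_cancel₀]
    exact pow_ne_zero _ hr.ne'
  have h5 : r ^ (n - 1) * r = r ^ n := by
    rw [← pow_succ, Nat.sub_add_cancel hn]
  have h6 : (r ^ n) * (1 + n * (t / r - 1)) = r ^ n + n * r ^ (n - 1) * (t - r) := by
    rw [← h5]; field_simp
  linarith [h4 ▸ h6 ▸ h3]

lemma tangent_lt (n : ℕ) (hn : 2 ≤ n) {r t : ℝ} (hr : 0 < r) (ht : 0 ≤ t) (hne : t ≠ r) :
    r ^ n + n * r ^ (n - 1) * (t - r) < t ^ n := by
  have ha : (-1 : ℝ) ≤ t / r - 1 := by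
    have : 0 ≤ t / r := div_nonneg ht hr.le
    linarith
  have ha' : t / r - 1 ≠ 0 := by
    intro h
    apply hne
    field_simp at h
    linarith
  have hp : (1:ℝ) < (n:ℝ) := by exact_mod_cast hn.trans_lt' one_lt_two
  have h := one_add_mul_self_lt_rpow_one_add ha ha' hp
  have h2 : (1 + (t / r - 1)) = t / r := by ring
  rw [h2] at h
  have htr : (0:ℝ) ≤ t / r := div_nonneg ht hr.le
  rw [Real.rpow_natCast] at h
  have hrpow : (0:ℝ) < r ^ n := pow_pos hr n
  have h3 : (r ^ n) * (1 + n * (t / r - 1)) < (r ^ n) * (t / r) ^ n :=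
    mul_lt_mul_of_pos_left h hrpow
  have h4 : (r ^ n) * (t / r) ^ n = t ^ n := by
    rw [div_pow, mul_div_cancel₀]
    exact pow_ne_zero _ hr.ne'
  have h5 : r ^ (n - 1) * r = r ^ n := by
    rw [← pow_succ, Nat.sub_add_cancel (by omega : 1 ≤ n)]
  have h6 : (r ^ n) * (1 + n * (t / r - 1)) = r ^ n + n * r ^ (n - 1) * (t - r) := by
    rw [← h5]; field_simp
  linarith [h4 ▸ h6 ▸ h3]

/-- linear access, centralized optimum: for `n ≥ 2` and `λ > 1`, the welfare
`W(c) = 1 − (1 − λc)ⁿ − nc` on `c ∈ [0, 1/λ]` is maximized at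
`c_opt = λ⁻¹ − λ^(−n/(n−1))`, with optimal value
`W(c_opt) = 1 − λ^(−n/(n−1)) − n (λ⁻¹ − λ^(−n/(n−1))) > 0`. -/
theorem stmt_4 (n : ℕ) (hn : 2 ≤ n) (lam : ℝ) (hlam : 1 < lam)
    (W : ℝ → ℝ) (hW : ∀ c, W c = 1 - (1 - lam * c) ^ n - n * c)
    (copt : ℝ) (hcopt : copt = lam⁻¹ - lam ^ (-(n : ℝ) / ((n : ℝ) - 1))) :
    copt ∈ Set.Icc 0 lam⁻¹ ∧
    (∀ c ∈ Set.Icc 0 lam⁻¹, W c ≤ W copt) ∧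
    W copt = 1 - lam ^ (-(n : ℝ) / ((n : ℝ) - 1))
      - n * (lam⁻¹ - lam ^ (-(n : ℝ) / ((n : ℝ) - 1))) ∧
    0 < W copt := by
  have hlam0 : (0:ℝ) < lam := by linarith
  have hn1 : (1:ℝ) ≤ (n:ℝ) - 1 := by
    have : (2:ℝ) ≤ (n:ℝ) := by exact_mod_cast hn
    linarith
  have hne : (n:ℝ) - 1 ≠ 0 := by linarith
  set r : ℝ := lam ^ (-1 / ((n:ℝ) - 1)) with hrdef
  have hr0 : 0 < r := Real.rpow_pos_of_pos hlam0 _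
  have hr1 : r < 1 :=
    Real.rpow_lt_one_of_one_lt_of_neg hlam (div_neg_of_neg_of_pos (by norm_num) (by linarith))
  -- r ^ (n-1) = lam⁻¹
  have hcast : ((n - 1 : ℕ) : ℝ) = (n:ℝ) - 1 := by
    have : 1 ≤ n := by omega
    push_cast [this]; ring
  have hrpow : r ^ (n - 1) = lam⁻¹ := by
    rw [hrdef, ← Real.rpow_natCast (lam ^ (-1 / ((n:ℝ) - 1))) (n - 1),
      ← Real.rpow_mul hlam0.le, hcast, div_mul_cancel₀ _ hne, Real.rpow_neg_one]
  -- lam ^ (-n/(n-1)) = lam⁻¹ * r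
  have hs : lam ^ (-(n:ℝ) / ((n:ℝ) - 1)) = lam⁻¹ * r := by
    have hexp : -(n:ℝ) / ((n:ℝ) - 1) = (-1) + (-1 / ((n:ℝ) - 1)) := by
      field_simp
      ring
    rw [hexp, Real.rpow_add hlam0, Real.rpow_neg_one]
  have hcopt' : copt = lam⁻¹ * (1 - r) := by
    rw [hcopt, hs]; ring
  have hrn : r ^ n = lam⁻¹ * r := by
    calc r ^ n = r ^ (n - 1) * r := by
          rw [← pow_succ, Nat.sub_add_cancel (by omega : 1 ≤ n)]
      _ = lam⁻¹ * r := by rw [hrpow]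
  have hinv : 0 < lam⁻¹ := inv_pos.2 hlam0
  have hlamcopt : 1 - lam * copt = r := by
    rw [hcopt']
    field_simp; ring
  have hWcopt : W copt = 1 - r ^ n - n * copt := by rw [hW, hlamcopt]
  constructor
  · constructor
    · rw [hcopt']; nlinarith
    · rw [hcopt']
      nlinarith [mul_nonneg hinv.le hr0.le]
  refine ⟨?_, ?_, ?_⟩
  · intro c hc
    obtain ⟨hc0, hc1⟩ := hc
    set t : ℝ := 1 - lam * c with htdef
    have ht0 : 0 ≤ t := by
      have : lam * c ≤ lam * lam⁻¹ := mul_le_mul_of_nonneg_left hc1 hlam0.le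
      rw [mul_inv_cancel₀ hlam0.ne'] at this
      simp [htdef]; linarith
    have key := tangent_le n (by omega) hr0 ht0
    rw [hrpow] at key
    have hc' : c = lam⁻¹ * (1 - t) := by
      rw [htdef]; field_simp; ring
    rw [hW, hW, hlamcopt, ← htdef]
    have : (n:ℝ) * copt - n * c = n * lam⁻¹ * (t - r) := by
      rw [hcopt', hc']; ring
    nlinarith
  · rw [hWcopt, hcopt', hs, hrn]; ring
  · have key := tangent_lt n hn hr0 (by norm_num : (0:ℝ) ≤ 1) hr1.ne'
    rw [hrpow, one_pow] at key
    rw [hWcopt, hcopt']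
    nlinarith
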